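/- There exist properties of pointed graphs expressible in ω-GML but not by any GMSC program; in particular, for any undecidable set U ⊆ ℕ, the property 'the number of out-neighbours of the distinguished node lies in U' is expressible in ω-GML (by the disjunction ⋁_{n ∈ U} ◇_{=n}⊤) but not by any GMSC program. -/

import Mathlib

/-- A finite directed node-labeled graph: finite node set `V`, out-neighbour
finsets `adj v`, and a labeling of nodes by sets of node label symbols from `α`. -/
structure LGraph (α : Type) : Type 1 where
  V : Type
  fintypeV : Fintype V
  adj : V → Finset V
  label : V → Set α

attribute [instance] LGraph.fintypeV

/-- Formulas of graded modal logic GML over node label symbols `α`: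
`⊤`, labels, negation, conjunction, and graded diamonds `◇_{≥k}`. -/
inductive GML (α : Type) : Type where
  | top : GML α
  | lab : α → GML α
  | neg : GML α → GML α
  | and : GML α → GML α → GML α
  | dia : ℕ → GML α → GML α

/-- Truth of a GML formula at a node of a labeled graph; `dia k φ` (`◇_{≥k}φ`)
holds iff at least `k` out-neighbours satisfy `φ`. -/
def GML.sat {α : Type} (G : LGraph α) : GML α → G.V → Prop
  | .top, _ => True
  | .lab p, v => p ∈ G.label v
  | .neg φ, v => ¬ GML.sat G φ v
  | .and φ ψ, v => GML.sat G φ v ∧ GML.sat G ψ v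
  | .dia k φ, v => ∃ s : Finset G.V, s ⊆ G.adj v ∧ k ≤ s.card ∧ ∀ u ∈ s, GML.sat G φ u

/-- `⊥` as a GML formula. -/
def GML.bot {α : Type} : GML α := .neg .top

/-- `□φ := ¬◇_{≥1}¬φ`. -/
def GML.box {α : Type} (φ : GML α) : GML α := .neg (.dia 1 (.neg φ))

/-- `◇_{=n}φ := ◇_{≥n}φ ∧ ¬◇_{≥n+1}φ`. -/
def GML.diaEq {α : Type} (n : ℕ) (φ : GML α) : GML α := .and (.dia n φ) (.neg (.dia (n + 1) φ))

/-- Schemata of GMSC over node label symbols `α` and head predicates (schema variables) `ν`. -/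
inductive Schema (α ν : Type) : Type where
  | top : Schema α ν
  | lab : α → Schema α ν
  | var : ν → Schema α ν
  | neg : Schema α ν → Schema α ν
  | and : Schema α ν → Schema α ν → Schema α ν
  | dia : ℕ → Schema α ν → Schema α ν

/-- Substituting a GML formula for each head predicate of a schema. -/
def Schema.subst {α ν : Type} (σ : ν → GML α) : Schema α ν → GML α
  | .top => .top
  | .lab p => .lab p
  | .var X => σ X
  | .neg φ => .neg (φ.subst σ)
  | .and φ ψ => .and (φ.subst σ) (ψ.subst σ)
  | .dia k φ => .dia k (φ.subst σ)

/-- A GMSC program over node label symbols `α` with head predicates `ν`: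
terminal clauses `X(0) :− term X`, iteration clauses `X :− iter X`, and a set
`app` of appointed predicates. -/
structure Program (α ν : Type) where
  term : ν → GML α
  iter : ν → Schema α ν
  app : Set ν

/-- The `n`-th iteration formula `Xⁿ` of a head predicate `X`: `X⁰` is the terminal body,
and `X^{n+1}` is the iteration body with each head predicate `Y` replaced by `Yⁿ`. -/
def Program.iterFormula {α ν : Type} (P : Program α ν) : ℕ → ν → GML α
  | 0 => P.term
  | n + 1 => fun X => (P.iter X).subst (P.iterFormula n)

/-- The program accepts `(G, w)` iff some appointed predicate's iteration formula is
true at `w` in some round. -/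
def Program.accepts {α ν : Type} (P : Program α ν) (G : LGraph α) (w : G.V) : Prop :=
  ∃ X ∈ P.app, ∃ n : ℕ, GML.sat G (P.iterFormula n X) w

namespace GMSCAux

/-- Maximum grade occurring in a GML formula. -/
def GMLmax {α : Type} : GML α → ℕ
  | .top => 0
  | .lab _ => 0
  | .neg φ => GMLmax φ
  | .and φ ψ => max (GMLmax φ) (GMLmax ψ)
  | .dia k φ => max k (GMLmax φ)

/-- Maximum grade occurring in a schema. -/
def SchemaMax {α ν : Type} : Schema α ν → ℕ
  | .top => 0
  | .lab _ => 0
  | .var _ => 0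
  | .neg φ => SchemaMax φ
  | .and φ ψ => max (SchemaMax φ) (SchemaMax ψ)
  | .dia k φ => max k (SchemaMax φ)

lemma gmlmax_subst {α ν : Type} (σ : ν → GML α) (k : ℕ) (h : ∀ X, GMLmax (σ X) ≤ k) :
    ∀ S : Schema α ν, GMLmax (S.subst σ) ≤ max (SchemaMax S) k := by
  intro S
  induction S with
  | top => simp [Schema.subst, GMLmax]
  | lab p => simp [Schema.subst, GMLmax]
  | var X =>
      simp only [Schema.subst]
      exact le_trans (h X) (le_max_right _ _)
  | neg φ ih => simpa [Schema.subst, GMLmax, SchemaMax] using ih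
  | and φ ψ ih1 ih2 =>
      simp only [Schema.subst, GMLmax, SchemaMax, max_le_iff] at *
      omega
  | dia k' φ ih =>
      simp only [Schema.subst, GMLmax, SchemaMax, max_le_iff] at *
      omega

/-- Star graph: a root `none` with `m` children, children have no out-edges, empty labels. -/
def star (α : Type) (m : ℕ) : LGraph α where
  V := Option (Fin m)
  fintypeV := inferInstance
  adj := fun v => match v with
    | none => Finset.univ.map ⟨some, Option.some_injective _⟩
    | some _ => ∅
  label := fun _ => ∅

/-- Truth value of a GML formula at any child of the star graph (independent of `m`). -/
def childVal {α : Type} : GML α → Prop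
  | .top => True
  | .lab _ => False
  | .neg φ => ¬ childVal φ
  | .and φ ψ => childVal φ ∧ childVal ψ
  | .dia k _ => k = 0

/-- Truth value of a GML formula at the root of the star graph with `m` children. -/
def rootVal {α : Type} (m : ℕ) : GML α → Prop
  | .top => True
  | .lab _ => False
  | .neg φ => ¬ rootVal m φ
  | .and φ ψ => rootVal m φ ∧ rootVal m ψ
  | .dia k φ => k = 0 ∨ (k ≤ m ∧ childVal φ)

lemma child_sat {α : Type} (φ : GML α) (m : ℕ) (i : Fin m) :
    GML.sat (star α m) φ (some i) ↔ childVal φ := by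
  induction φ with
  | top => simp [GML.sat, childVal]
  | lab p => simp [GML.sat, childVal, star]
  | neg φ ih => simp [GML.sat, childVal, ih]
  | and φ ψ ih1 ih2 => simp [GML.sat, childVal, ih1, ih2]
  | dia k φ ih =>
      simp only [GML.sat, childVal]
      constructor
      · rintro ⟨s, hs, hk, -⟩
        have : s = ∅ := Finset.subset_empty.mp hs
        subst this
        simpa using hk
      · rintro rfl
        exact ⟨∅, by simp⟩

lemma mem_star_adj_none {α : Type} {m : ℕ} {u : (star α m).V} :
    u ∈ (star α m).adj none ↔ ∃ i : Fin m, u = some i := by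
  revert u
  show ∀ u : Option (Fin m), u ∈ Finset.univ.map ⟨some, Option.some_injective _⟩ ↔ ∃ i : Fin m, u = some i
  intro u
  simp [eq_comm]

lemma card_star_adj_none (α : Type) (m : ℕ) : ((star α m).adj none).card = m := by
  simp [star]

lemma root_sat {α : Type} (φ : GML α) (m : ℕ) :
    GML.sat (star α m) φ none ↔ rootVal m φ := by
  induction φ with
  | top => simp [GML.sat, rootVal]
  | lab p => simp [GML.sat, rootVal, star]
  | neg φ ih => simp [GML.sat, rootVal, ih]
  | and φ ψ ih1 ih2 => simp [GML.sat, rootVal, ih1, ih2]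
  | dia k φ ih =>
      simp only [GML.sat, rootVal]
      constructor
      · rintro ⟨s, hs, hk, hall⟩
        rcases Nat.eq_zero_or_pos k with hk0 | hk0
        · exact Or.inl hk0
        · refine Or.inr ⟨?_, ?_⟩
          · calc k ≤ s.card := hk
              _ ≤ ((star α m).adj none).card := Finset.card_le_card hs
              _ = m := card_star_adj_none α m
          · have : ∃ u, u ∈ s := Finset.card_pos.mp (lt_of_lt_of_le hk0 hk)
            obtain ⟨u, hu⟩ := this
            obtain ⟨i, rfl⟩ := mem_star_adj_none.mp (hs hu)
            exact (child_sat φ m i).mp (hall _ hu)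
      · rintro (rfl | ⟨hkm, hc⟩)
        · exact ⟨∅, by simp⟩
        · refine ⟨(star α m).adj none, Finset.Subset.refl _, ?_, ?_⟩
          · rw [card_star_adj_none]; exact hkm
          · intro u hu
            obtain ⟨i, rfl⟩ := mem_star_adj_none.mp hu
            exact (child_sat φ m i).mpr hc

lemma rootVal_congr {α : Type} (K m m' : ℕ) (hm : K ≤ m) (hm' : K ≤ m') :
    ∀ φ : GML α, GMLmax φ ≤ K → (rootVal m φ ↔ rootVal m' φ) := by
  intro φ
  induction φ with
  | top => simp [rootVal]
  | lab p => simp [rootVal]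
  | neg φ ih => intro h; simp only [rootVal]; rw [ih h]
  | and φ ψ ih1 ih2 =>
      intro h
      simp only [GMLmax, max_le_iff] at h
      simp only [rootVal]
      rw [ih1 h.1, ih2 h.2]
  | dia k φ ih =>
      intro h
      simp only [GMLmax, max_le_iff] at h
      have h1 : k ≤ m := h.1.trans hm
      have h2 : k ≤ m' := h.1.trans hm'
      simp [rootVal, h1, h2]

/-- Bound on all grades occurring in a program. -/
noncomputable def Kbound {α ν : Type} [Fintype ν] (P : Program α ν) : ℕ :=
  max (Finset.univ.sup fun X => GMLmax (P.term X))
      (Finset.univ.sup fun X => SchemaMax (P.iter X))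

lemma iter_bound {α ν : Type} [Fintype ν] (P : Program α ν) :
    ∀ (n : ℕ) (X : ν), GMLmax (P.iterFormula n X) ≤ Kbound P := by
  intro n
  induction n with
  | zero =>
      intro X
      unfold Kbound
      exact le_trans (Finset.le_sup (f := fun Y => GMLmax (P.term Y)) (Finset.mem_univ X)) (le_max_left _ _)
  | succ n ih =>
      intro X
      refine le_trans (gmlmax_subst _ _ ih (P.iter X)) (max_le ?_ le_rfl)
      unfold Kbound
      exact le_trans (Finset.le_sup (f := fun Y => SchemaMax (P.iter Y)) (Finset.mem_univ X)) (le_max_right _ _)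

lemma accepts_congr {α ν : Type} [Fintype ν] (P : Program α ν) (m m' : ℕ)
    (hm : Kbound P ≤ m) (hm' : Kbound P ≤ m') :
    P.accepts (star α m) none ↔ P.accepts (star α m') none := by
  unfold Program.accepts
  refine exists_congr fun X => and_congr_right fun _ => exists_congr fun n => ?_
  rw [root_sat, root_sat, rootVal_congr (Kbound P) m m' hm hm' _ (iter_bound P n X)]

end GMSCAux

/-- For any undecidable (non-computable) set `U ⊆ ℕ`, the property
"the number of out-neighbours of the distinguished node lies in `U`" is expressible in
ω-GML by the countable disjunction `⋁_{n ∈ U} ◇_{=n}⊤` (a pointed graph satisfies some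
disjunct iff its out-degree lies in `U`), but it is not expressible by any GMSC program. -/
theorem omega_gml_strictly_more_expressive_than_gmsc
    (α : Type) (U : Set ℕ) (hU : ¬ ComputablePred fun n => n ∈ U) :
    (∀ (G : LGraph α) (w : G.V),
        (G.adj w).card ∈ U ↔ ∃ n ∈ U, GML.sat G (GML.diaEq n GML.top) w) ∧
    ¬ ∃ (ν : Type) (_ : Fintype ν) (P : Program α ν),
        ∀ (G : LGraph α) (w : G.V), P.accepts G w ↔ (G.adj w).card ∈ U := by
  classical
  constructor
  · intro G w
    constructor
    · intro h
      refine ⟨(G.adj w).card, h, ?_, ?_⟩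
      · exact ⟨G.adj w, Finset.Subset.refl _, le_rfl, fun _ _ => trivial⟩
      · rintro ⟨s, hs, hk, -⟩
        have := Finset.card_le_card hs
        omega
    · rintro ⟨n, hn, ⟨s, hs, hk, -⟩, hneg⟩
      have h1 : n ≤ (G.adj w).card := le_trans hk (Finset.card_le_card hs)
      have h2 : ¬ (n + 1 ≤ (G.adj w).card) := fun h =>
        hneg ⟨G.adj w, Finset.Subset.refl _, h, fun _ _ => trivial⟩
      have : (G.adj w).card = n := by omega
      rwa [this]
  · rintro ⟨ν, hν, P, hP⟩
    haveI := hν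
    set K := GMSCAux.Kbound P with hK
    have key : ∀ m : ℕ, m ∈ U ↔ P.accepts (GMSCAux.star α (min m K)) none := by
      intro m
      have h1 : m ∈ U ↔ P.accepts (GMSCAux.star α m) none := by
        rw [hP (GMSCAux.star α m) none, GMSCAux.card_star_adj_none]
      rw [h1]
      rcases le_or_gt m K with hmK | hmK
      · rw [min_eq_left hmK]
      · rw [min_eq_right hmK.le]
        exact GMSCAux.accepts_congr P m K hmK.le le_rfl
    apply hU
    refine ⟨fun n => Classical.propDecidable _, ?_⟩
    let B : Fin (K + 1) → Bool := fun i => decide (P.accepts (GMSCAux.star α i.val) none)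
    let g : ℕ → Fin (K + 1) := fun n => ⟨min n K, by omega⟩
    have hB : Primrec B := Primrec.dom_finite B
    have hg : Primrec g :=
      Primrec.fin_val_iff.1
        ((Primrec.nat_min.comp Primrec.id (Primrec.const K)).of_eq fun n => rfl)
    have hcomp : Computable fun n => B (g n) := (hB.comp hg).to_comp
    exact hcomp.of_eq fun n => decide_eq_decide.mpr (key n).symm
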